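/- arXiv:1409.0830 — 2 statements merged into one kernel-verified Lean document; each statement's English description precedes it below -/
import Mathlib

section
/- Let g ∈ SL(2,ℝ). If there exist γ ∈ Γ and a ∈ (0,1] such that (gγ)·(0,1)ᵗ = (a,0)ᵗ, then there exist γ' ∈ Γ and (a',b') ∈ Ω₂ such that g·γ' = M_{a',b'}·Rot, where Rot = [[0,1],[−1,0]]. -/
open Real Matrix MeasureTheory Filter Set

noncomputable section

abbrev SL2 := Matrix.SpecialLinearGroup (Fin 2) ℝ

/-- The elliptic generator R of the Veech group of 𝓛. -/
def Rgen : SL2 := ⟨!![1 + Real.sqrt 2, -(2 + Real.sqrt 2); 1, -1], by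
  rw [Matrix.det_fin_two_of]; ring⟩

/-- The parabolic generator S of the Veech group of 𝓛. -/
def Sgen : SL2 := ⟨!![1, 2 + Real.sqrt 2; 0, 1], by
  rw [Matrix.det_fin_two_of]; ring⟩

/-- The Veech group Γ of the translation surface 𝓛. -/
def Γ : Subgroup SL2 := Subgroup.closure {Rgen, Sgen}

/-- The region Ω₂ = {(a,b) : 0 < a ≤ 1, 1 − a < b ≤ 1}. -/
def Ω₂ : Set (ℝ × ℝ) := {p | 0 < p.1 ∧ p.1 ≤ 1 ∧ 1 - p.1 < p.2 ∧ p.2 ≤ 1}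

/-- The rotation by π/2 in the clockwise direction. -/
def Rot : Matrix (Fin 2) (Fin 2) ℝ := !![0, 1; -1, 0]


lemma sqrt2_mul_self : Real.sqrt 2 * Real.sqrt 2 = 2 :=
  Real.mul_self_sqrt (by norm_num)

/-- The lower unipotent element P = R³S of Γ. -/
def Pgen : SL2 := Rgen ^ 3 * Sgen

lemma Pgen_coe : (Pgen : Matrix (Fin 2) (Fin 2) ℝ) = !![1, 0; 1, 1] := by
  have h2 := sqrt2_mul_self
  show ((Rgen ^ 3 * Sgen : SL2) : Matrix (Fin 2) (Fin 2) ℝ) = _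
  rw [Matrix.SpecialLinearGroup.coe_mul, pow_succ, pow_succ, pow_one,
    Matrix.SpecialLinearGroup.coe_mul, Matrix.SpecialLinearGroup.coe_mul]
  simp only [Rgen, Sgen]
  ext i j
  fin_cases i <;> fin_cases j
  · simp [Matrix.mul_apply, Fin.sum_univ_two]
    linear_combination (Real.sqrt 2 + 1) * h2
  · simp [Matrix.mul_apply, Fin.sum_univ_two]
    linear_combination (Real.sqrt 2 ^ 2 + 2 * Real.sqrt 2) * h2
  · simp [Matrix.mul_apply, Fin.sum_univ_two]
    linear_combination h2
  · simp [Matrix.mul_apply, Fin.sum_univ_two]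
    linear_combination (Real.sqrt 2 + 1) * h2

lemma Pgen_mem : Pgen ∈ Γ := by
  have hR : Rgen ∈ Γ := Subgroup.subset_closure (by simp)
  have hS : Sgen ∈ Γ := Subgroup.subset_closure (by simp)
  exact mul_mem (pow_mem hR 3) hS

lemma Pgen_zpow_coe (k : ℤ) :
    ((Pgen ^ k : SL2) : Matrix (Fin 2) (Fin 2) ℝ) = !![1, 0; (k : ℝ), 1] := by
  have hinv : ((Pgen⁻¹ : SL2) : Matrix (Fin 2) (Fin 2) ℝ) = !![1, 0; -1, 1] := by
    rw [Matrix.SpecialLinearGroup.coe_inv, Pgen_coe, Matrix.adjugate_fin_two_of]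
    norm_num
  induction k using Int.induction_on with
  | zero => simp [Matrix.one_fin_two]
  | succ n ih =>
      rw [_root_.zpow_add_one, Matrix.SpecialLinearGroup.coe_mul, ih, Pgen_coe]
      ext i j
      fin_cases i <;> fin_cases j <;>
        simp [Matrix.mul_apply, Fin.sum_univ_two]
  | pred n ih =>
      rw [_root_.zpow_sub_one, Matrix.SpecialLinearGroup.coe_mul, ih, hinv]
      ext i j
      fin_cases i <;> fin_cases j <;>
        simp [Matrix.mul_apply, Fin.sum_univ_two] <;> ring

/-- If some gγ (γ ∈ Γ) sends (0,1) to a horizontal vector (a,0) with 0 < a ≤ 1, then a suitable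
Γ-translate of g is of the form M_{a',b'}·Rot with (a',b') ∈ Ω₂. -/
theorem surface_in_Omega2 (g : SL2)
    (h : ∃ γ ∈ Γ, ∃ a : ℝ, 0 < a ∧ a ≤ 1 ∧
      Matrix.mulVec ((g * γ : SL2) : Matrix (Fin 2) (Fin 2) ℝ) ![0, 1] = ![a, 0]) :
    ∃ γ' ∈ Γ, ∃ p ∈ Ω₂,
      ((g * γ' : SL2) : Matrix (Fin 2) (Fin 2) ℝ) = !![p.1, p.2; 0, p.1⁻¹] * Rot := by
  obtain ⟨γ, hγ, a, ha0, ha1, hvec⟩ := h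
  set M : Matrix (Fin 2) (Fin 2) ℝ := ((g * γ : SL2) : Matrix (Fin 2) (Fin 2) ℝ) with hM
  have h01 : M 0 1 = a := by
    have := congrFun hvec 0
    simpa [Matrix.mulVec, dotProduct, Fin.sum_univ_two] using this
  have h11 : M 1 1 = 0 := by
    have := congrFun hvec 1
    simpa [Matrix.mulVec, dotProduct, Fin.sum_univ_two] using this
  have hdet : M.det = 1 := (g * γ).2
  have h10 : M 1 0 = -a⁻¹ := by
    rw [Matrix.det_fin_two, h01, h11] at hdet
    field_simp
    nlinarith [hdet]
  set c : ℝ := M 0 0 with hc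
  set m : ℤ := ⌊(1 + c) / a⌋ with hm
  set b : ℝ := -c + a * m with hb
  have hb1 : b ≤ 1 := by
    have := Int.floor_le ((1 + c) / a)
    have : (m : ℝ) * a ≤ 1 + c := by
      rw [hm]; exact (le_div_iff₀ ha0).mp (Int.floor_le _)
    rw [hb]; linarith [this]
  have hb2 : 1 - a < b := by
    have : (1 + c) / a < m + 1 := Int.lt_floor_add_one _
    have : 1 + c < (m + 1) * a := (div_lt_iff₀ ha0).mp this
    rw [hb]; nlinarith [this]
  refine ⟨γ * Pgen ^ (-m), mul_mem hγ (zpow_mem Pgen_mem _), (a, b), ⟨ha0, ha1, hb2, hb1⟩, ?_⟩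
  have hcoe : ((g * (γ * Pgen ^ (-m)) : SL2) : Matrix (Fin 2) (Fin 2) ℝ)
      = M * !![1, 0; -(m : ℝ), 1] := by
    rw [← mul_assoc, Matrix.SpecialLinearGroup.coe_mul, Pgen_zpow_coe, ← hM]
    push_cast
    ring_nf
  rw [hcoe, Matrix.eta_fin_two M, h01, h11, h10, ← hc]
  show _ = !![a, b; 0, a⁻¹] * Rot
  rw [Rot]
  ext i j
  fin_cases i <;> fin_cases j <;>
    simp [Matrix.mul_apply, Fin.sum_univ_two, hb] <;> ring
end
end

section
/- Let E = {(a,b) ∈ ℝ² : 0 < a ≤ 1 and 1 − a < b ≤ 1}, and define Φ : E → ℝ² by Φ(a,b) = (b, b·⌊(1+a)/b⌋ − a). Then Φ is a bijection from E onto E, and Φ preserves two-dimensional Lebesgue measure: for every Lebesgue-measurable set A ⊆ E, the measure of Φ⁻¹(A) equals the measure of A. (Φ is the branch T_AH of the return map of the horocycle flow, mapping the subregion Ω_AH of the section onto Ω₂.) -/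
open Real MeasureTheory Set

noncomputable section

/-- The region E = Ω_AH = Ω₂ = {(a,b) : 0 < a ≤ 1, 1 − a < b ≤ 1}. -/
def E : Set (ℝ × ℝ) := {p | 0 < p.1 ∧ p.1 ≤ 1 ∧ 1 - p.1 < p.2 ∧ p.2 ≤ 1}

/-- The branch T_AH of the return map: Φ(a,b) = (b, b·⌊(1+a)/b⌋ − a). -/
def Φ (p : ℝ × ℝ) : ℝ × ℝ := (p.2, p.2 * (⌊(1 + p.1) / p.2⌋ : ℤ) - p.1)

/-- Key arithmetic facts. -/
lemma key {a b : ℝ} (ha : 0 < a) (ha1 : a ≤ 1) (hb : 1 - a < b) (hb1 : b ≤ 1) :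
    0 < b ∧ 1 - b < b * (⌊(1 + a) / b⌋ : ℤ) - a ∧ b * (⌊(1 + a) / b⌋ : ℤ) - a ≤ 1 ∧
      ⌊(1 + (b * (⌊(1 + a) / b⌋ : ℤ) - a)) / b⌋ = ⌊(1 + a) / b⌋ := by
  have hb0 : 0 < b := lt_of_le_of_lt (by linarith) hb
  set n : ℤ := ⌊(1 + a) / b⌋ with hn
  have h1 : (n : ℝ) ≤ (1 + a) / b := Int.floor_le _
  have h2 : (1 + a) / b < n + 1 := Int.lt_floor_add_one _
  have h1' : b * (n : ℝ) ≤ 1 + a := by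
    calc b * (n : ℝ) ≤ b * ((1 + a) / b) := by nlinarith
    _ = 1 + a := by field_simp
  have h2' : 1 + a < b * ((n : ℝ) + 1) := by
    calc 1 + a = b * ((1 + a) / b) := by field_simp
    _ < b * ((n : ℝ) + 1) := by nlinarith
  refine ⟨hb0, by nlinarith, by linarith, ?_⟩
  rw [Int.floor_eq_iff]
  constructor
  · rw [le_div_iff₀ hb0]; nlinarith
  · rw [div_lt_iff₀ hb0]; push_cast; nlinarith

lemma swap_mem_E {p : ℝ × ℝ} (hp : p ∈ E) : p.swap ∈ E := by
  obtain ⟨h1, h2, h3, h4⟩ := hp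
  exact ⟨by dsimp [Prod.swap]; linarith, by exact h4, by dsimp [Prod.swap]; linarith, h2⟩

lemma phi_mem_E {p : ℝ × ℝ} (hp : p ∈ E) : Φ p ∈ E := by
  obtain ⟨h1, h2, h3, h4⟩ := hp
  obtain ⟨hb0, hc1, hc2, _⟩ := key h1 h2 h3 h4
  exact ⟨hb0, h4, hc1, hc2⟩

/-- Left inverse: swap (Φ (swap (Φ p))) = p on E. -/
lemma phi_left_inv {p : ℝ × ℝ} (hp : p ∈ E) : (Φ (Φ p).swap).swap = p := by
  obtain ⟨a, b⟩ := p
  obtain ⟨h1, h2, h3, h4⟩ := hp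
  obtain ⟨hb0, hc1, hc2, hfl⟩ := key h1 h2 h3 h4
  simp only [Φ, Prod.swap, Prod.mk.injEq]
  rw [hfl]
  exact ⟨by ring, trivial⟩

lemma phi_inj : Set.InjOn Φ E := by
  intro p hp q hq h
  have := phi_left_inv hp
  rw [h, phi_left_inv hq] at this
  exact this.symm

lemma phi_surj : Set.SurjOn Φ E E := by
  intro q hq
  refine ⟨(Φ q.swap).swap, ?_, ?_⟩
  · exact swap_mem_E (phi_mem_E (swap_mem_E hq))
  · have := phi_left_inv (swap_mem_E hq)
    have h2 : Φ (Φ q.swap).swap = ((Φ (Φ q.swap).swap).swap).swap := rfl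
    rw [h2, this, Prod.swap_swap]

lemma phi_bijOn : Set.BijOn Φ E E := ⟨fun p hp => phi_mem_E hp, phi_inj, phi_surj⟩

/-- The affine piece. -/
def fnE (n : ℤ) : ℝ × ℝ ≃ ℝ × ℝ where
  toFun p := (p.2, (n : ℝ) * p.2 - p.1)
  invFun q := ((n : ℝ) * q.1 - q.2, q.1)
  left_inv p := by simp
  right_inv q := by simp

lemma fn_measurePreserving (n : ℤ) :
    MeasurePreserving (fnE n) (volume : Measure (ℝ × ℝ)) volume := by
  have h1 : MeasurePreserving (Prod.swap : ℝ × ℝ → ℝ × ℝ)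
      (volume : Measure (ℝ × ℝ)) volume := by
    rw [Measure.volume_eq_prod]; exact Measure.measurePreserving_swap
  have h2 : MeasurePreserving (fun p : ℝ × ℝ => (p.1, (n : ℝ) * p.1 - p.2))
      (volume : Measure (ℝ × ℝ)) volume := by
    rw [Measure.volume_eq_prod]
    exact (MeasurePreserving.id volume).skew_product
      (by fun_prop) (Filter.Eventually.of_forall fun x =>
        Measure.map_sub_left_eq_self volume ((n : ℝ) * x))
  have : (fnE n : ℝ × ℝ → ℝ × ℝ) =
      (fun p : ℝ × ℝ => (p.1, (n : ℝ) * p.1 - p.2)) ∘ Prod.swap := by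
    ext p <;> rfl
  rw [show ((fnE n : ℝ × ℝ → ℝ × ℝ)) = _ from this]
  exact h2.comp h1

lemma measurableSet_E : MeasurableSet E := by
  apply MeasurableSet.inter
  · exact measurableSet_lt measurable_const measurable_fst
  apply MeasurableSet.inter
  · exact measurableSet_le measurable_fst measurable_const
  apply MeasurableSet.inter
  · exact measurableSet_lt (by fun_prop) measurable_snd
  · exact measurableSet_le measurable_snd measurable_const

/-- The piece of E with floor value n. -/
def F (n : ℤ) : Set (ℝ × ℝ) := E ∩ {p | ⌊(1 + p.1) / p.2⌋ = n}

lemma measurableSet_F (n : ℤ) : MeasurableSet (F n) := by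
  apply measurableSet_E.inter
  have : Measurable fun p : ℝ × ℝ => ⌊(1 + p.1) / p.2⌋ := by
    apply Measurable.floor; fun_prop
  exact this (measurableSet_singleton n)

lemma F_disjoint : Pairwise (Function.onFun Disjoint F) := by
  intro n m hnm
  apply Set.disjoint_left.2
  rintro p ⟨_, hp1⟩ ⟨_, hp2⟩
  exact hnm (hp1.symm.trans hp2)

lemma F_union : (⋃ n : ℤ, F n) = E := by
  ext p
  simp only [mem_iUnion, F, mem_inter_iff, mem_setOf_eq]
  exact ⟨fun ⟨n, h, _⟩ => h, fun h => ⟨⌊(1 + p.1) / p.2⌋, h, rfl⟩⟩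

lemma phi_eq_fn_on_F {n : ℤ} {p : ℝ × ℝ} (hp : p ∈ F n) : Φ p = fnE n p := by
  obtain ⟨_, hp2⟩ := hp
  simp only [Φ, fnE, Equiv.coe_fn_mk, mem_setOf_eq] at *
  rw [hp2]; ring_nf

lemma fn_measurable (n : ℤ) : Measurable (fnE n) := by
  simp only [fnE, Equiv.coe_fn_mk]; fun_prop

lemma fn_symm_measurable (n : ℤ) : Measurable (fnE n).symm := by
  simp only [fnE, Equiv.coe_fn_symm_mk]; fun_prop

/-- Φ is a bijection of E onto E preserving two-dimensional Lebesgue measure. -/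
theorem T_AH_bijective_measure_preserving :
    Set.BijOn Φ E E ∧
    ∀ A : Set (ℝ × ℝ), A ⊆ E → MeasurableSet A → volume (E ∩ Φ ⁻¹' A) = volume A := by
  refine ⟨phi_bijOn, fun A hAE hA => ?_⟩
  -- image sets
  have himg : ∀ n : ℤ, (fnE n) '' (F n) = (fnE n).symm ⁻¹' (F n) := fun n =>
    (Equiv.image_eq_preimage_symm _ _)
  have himg_meas : ∀ n : ℤ, MeasurableSet ((fnE n) '' (F n)) := fun n => by
    rw [himg n]; exact fn_symm_measurable n (measurableSet_F n)
  -- Step 1: decompose the preimage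
  have hdec : E ∩ Φ ⁻¹' A = ⋃ n : ℤ, (F n ∩ (fnE n) ⁻¹' A) := by
    ext p
    simp only [mem_inter_iff, mem_preimage, mem_iUnion]
    constructor
    · rintro ⟨hpE, hpA⟩
      refine ⟨⌊(1 + p.1) / p.2⌋, ⟨hpE, rfl⟩, ?_⟩
      rwa [← phi_eq_fn_on_F ⟨hpE, rfl⟩]
    · rintro ⟨n, hpF, hpA⟩
      exact ⟨hpF.1, by rwa [phi_eq_fn_on_F hpF]⟩
  -- Step 2: each piece has measure of corresponding image piece
  have hpiece : ∀ n : ℤ, volume (F n ∩ (fnE n) ⁻¹' A) = volume ((fnE n) '' (F n) ∩ A) := by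
    intro n
    have h1 : F n ∩ (fnE n) ⁻¹' A = (fnE n) ⁻¹' ((fnE n) '' (F n) ∩ A) := by
      rw [Set.preimage_inter, Set.preimage_image_eq _ (fnE n).injective]
    rw [h1]
    exact (fn_measurePreserving n).measure_preimage
      ((himg_meas n).inter hA).nullMeasurableSet
  -- Step 3: sum up the left side
  have hleft : volume (E ∩ Φ ⁻¹' A) = ∑' n : ℤ, volume (F n ∩ (fnE n) ⁻¹' A) := by
    rw [hdec]
    refine measure_iUnion ?_ fun n => (measurableSet_F n).inter (fn_measurable n hA)
    intro n m hnm
    exact (F_disjoint hnm).mono inter_subset_left inter_subset_left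
  -- Step 4: sum up the right side
  have himg_phi : ∀ n : ℤ, (fnE n) '' (F n) = Φ '' (F n) := fun n =>
    (Set.image_congr fun p hp => (phi_eq_fn_on_F hp).symm)
  have hright : (∑' n : ℤ, volume ((fnE n) '' (F n) ∩ A)) = volume A := by
    have hdisj : Pairwise (Function.onFun Disjoint fun n => (fnE n) '' (F n) ∩ A) := by
      intro n m hnm
      apply Disjoint.mono inter_subset_left inter_subset_left
      rw [himg_phi n, himg_phi m]
      apply Set.disjoint_left.2
      rintro q ⟨p, hp, rfl⟩ ⟨p', hp', heq⟩
      have hpE : p ∈ E := hp.1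
      have hp'E : p' ∈ E := hp'.1
      have : p' = p := phi_inj hp'E hpE heq
      subst this
      exact (Set.disjoint_left.1 (F_disjoint hnm)) hp hp'
    rw [← measure_iUnion hdisj fun n => (himg_meas n).inter hA]
    congr 1
    rw [← Set.iUnion_inter]
    have : (⋃ n : ℤ, (fnE n) '' (F n)) = E := by
      simp_rw [himg_phi]
      rw [← Set.image_iUnion, F_union]
      exact phi_bijOn.image_eq
    rw [this, Set.inter_eq_right.2 hAE]
  rw [hleft]
  rw [← hright]
  exact tsum_congr hpiece

end
end
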